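/- If M and L are stellar equivalent complexes on disjoint vertex sets from a complex P, and P is vertex-disjoint from both, then the joins satisfy M ⋆ P ∼ L ⋆ P (stellar equivalence is preserved under join with a fixed complex). -/

import Mathlib

open Finset

/-- A `Chain` is a formal `ℤ/2`-sum of simplexes (finite sets of integer vertices). -/
abbrev Chain : Type := (Finset ℕ) →₀ ZMod 2

/-- Boundary of a single simplex: the sum of its codimension-1 faces. -/
noncomputable def sbnd (s : Finset ℕ) : Chain :=
  ∑ i ∈ s, Finsupp.single (s.erase i) 1

/-- The `ℤ/2` boundary operator, extended linearly to chains. -/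
noncomputable def bnd (C : Chain) : Chain :=
  C.sum fun s c => c • sbnd s

/-- Join of chains, defined bilinearly by union of vertex sets on simplexes. -/
noncomputable def joinC (K L : Chain) : Chain :=
  K.sum fun A a => L.sum fun B b => Finsupp.single (A ∪ B) (a * b)

/-- The link `lk(A,K)`. -/
noncomputable def lkC (A : Finset ℕ) (K : Chain) : Chain :=
  K.sum fun g c => if A ⊆ g then Finsupp.single (g \ A) c else 0

/-- `Q(A,K)`: the sum of generators of `K` not containing `A`. -/
noncomputable def QC (A : Finset ℕ) (K : Chain) : Chain :=
  K.sum fun g c => if A ⊆ g then 0 else Finsupp.single g c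

/-- Stellar subdivision `(A a)K = a ⋆ ∂A ⋆ lk(A,K) + Q(A,K)`. -/
noncomputable def subdivC (A : Finset ℕ) (a : ℕ) (K : Chain) : Chain :=
  joinC (Finsupp.single {a} 1) (joinC (sbnd A) (lkC A K)) + QC A K

/-- Stellar weld `(A a)⁻¹ K = A ⋆ B + Q(a,K)` (for `lk(a,K) = ∂A ⋆ B`). -/
noncomputable def weldC (A : Finset ℕ) (a : ℕ) (B K : Chain) : Chain :=
  joinC (Finsupp.single A 1) B + QC {a} K

/-- Relabeling of vertices by a map `f`. -/
noncomputable def renameC (f : ℕ → ℕ) (K : Chain) : Chain :=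
  K.sum fun g c => Finsupp.single (g.image f) c

/-- The set of vertices of a chain. -/
def vertsC (K : Chain) : Finset ℕ := K.support.sup id

/-- A stellar move: a subdivision, a weld, or a bijective relabeling of vertices. -/
inductive StellarMove : Chain → Chain → Prop
  | subdiv (A : Finset ℕ) (a : ℕ) (K : Chain)
      (hA : ∃ g ∈ K.support, A ⊆ g) (hA' : A.Nonempty)
      (ha : ∀ g ∈ K.support, a ∉ g) :
      StellarMove K (subdivC A a K)
  | weld (A : Finset ℕ) (a : ℕ) (B K : Chain)
      (hlk : lkC {a} K = joinC (sbnd A) B)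
      (hA : ∀ g ∈ K.support, ¬ A ⊆ g) (hA' : A.Nonempty) :
      StellarMove K (weldC A a B K)
  | relabel (f : ℕ → ℕ) (hf : Function.Bijective f) (K : Chain) :
      StellarMove K (renameC f K)

/-- Stellar equivalence: a finite sequence of stellar moves. -/
def StellarEquiv : Chain → Chain → Prop := Relation.ReflTransGen StellarMove

section Lemmas
variable {K K' L L' P : Chain} {A B g h : Finset ℕ} {a b c : ZMod 2} {f : ℕ → ℕ}

lemma joinC_zero_left (L : Chain) : joinC 0 L = 0 := Finsupp.sum_zero_index

lemma joinC_zero_right (K : Chain) : joinC K 0 = 0 := by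
  simp [joinC, Finsupp.sum_zero_index, Finsupp.sum_fun_zero]

lemma joinC_single_left (A : Finset ℕ) (a : ZMod 2) (L : Chain) :
    joinC (Finsupp.single A a) L = L.sum fun B b => Finsupp.single (A ∪ B) (a * b) := by
  unfold joinC
  apply Finsupp.sum_single_index
  simp

lemma joinC_single_single (A B : Finset ℕ) (a b : ZMod 2) :
    joinC (Finsupp.single A a) (Finsupp.single B b) = Finsupp.single (A ∪ B) (a * b) := by
  rw [joinC_single_left]
  apply Finsupp.sum_single_index
  simp

lemma joinC_add_left (K K' L : Chain) : joinC (K + K') L = joinC K L + joinC K' L := by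
  unfold joinC
  apply Finsupp.sum_add_index'
  · intro A; simp
  · intro A b₁ b₂
    rw [← Finsupp.sum_add]
    apply Finsupp.sum_congr
    intro B _
    rw [add_mul, Finsupp.single_add]

lemma joinC_add_right (K L L' : Chain) : joinC K (L + L') = joinC K L + joinC K L' := by
  unfold joinC
  rw [← Finsupp.sum_add]
  apply Finsupp.sum_congr
  intro A _
  apply Finsupp.sum_add_index'
  · intro B; simp
  · intro B b₁ b₂; rw [mul_add, Finsupp.single_add]

lemma joinC_assoc (K L M : Chain) : joinC (joinC K L) M = joinC K (joinC L M) := by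
  induction K using Finsupp.induction_linear with
  | zero => simp [joinC_zero_left]
  | add p q hp hq => simp only [joinC_add_left, hp, hq]
  | single A a =>
    induction L using Finsupp.induction_linear with
    | zero => simp [joinC_zero_left, joinC_zero_right]
    | add p q hp hq => simp only [joinC_add_left, joinC_add_right, hp, hq]
    | single B b =>
      induction M using Finsupp.induction_linear with
      | zero => simp [joinC_zero_right]
      | add p q hp hq => simp only [joinC_add_right, hp, hq]
      | single C c =>
        simp only [joinC_single_single, Finset.union_assoc, mul_assoc]

lemma lkC_zero (A : Finset ℕ) : lkC A 0 = 0 := Finsupp.sum_zero_index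

lemma lkC_single (A g : Finset ℕ) (c : ZMod 2) :
    lkC A (Finsupp.single g c) = if A ⊆ g then Finsupp.single (g \ A) c else 0 := by
  unfold lkC
  apply Finsupp.sum_single_index
  split <;> simp

lemma lkC_add (A : Finset ℕ) (K K' : Chain) : lkC A (K + K') = lkC A K + lkC A K' := by
  unfold lkC
  apply Finsupp.sum_add_index'
  · intro g; split <;> simp
  · intro g b₁ b₂; split <;> simp [Finsupp.single_add]

lemma QC_zero (A : Finset ℕ) : QC A 0 = 0 := Finsupp.sum_zero_index

lemma QC_single (A g : Finset ℕ) (c : ZMod 2) :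
    QC A (Finsupp.single g c) = if A ⊆ g then 0 else Finsupp.single g c := by
  unfold QC
  apply Finsupp.sum_single_index
  split <;> simp

lemma QC_add (A : Finset ℕ) (K K' : Chain) : QC A (K + K') = QC A K + QC A K' := by
  unfold QC
  apply Finsupp.sum_add_index'
  · intro g; split <;> simp
  · intro g b₁ b₂; split <;> simp [Finsupp.single_add]

lemma renameC_zero (f : ℕ → ℕ) : renameC f 0 = 0 := Finsupp.sum_zero_index

lemma renameC_single (f : ℕ → ℕ) (g : Finset ℕ) (c : ZMod 2) :
    renameC f (Finsupp.single g c) = Finsupp.single (g.image f) c := by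
  unfold renameC
  apply Finsupp.sum_single_index
  simp

lemma renameC_add (f : ℕ → ℕ) (K K' : Chain) :
    renameC f (K + K') = renameC f K + renameC f K' := by
  unfold renameC
  apply Finsupp.sum_add_index'
  · intro g; simp
  · intro g b₁ b₂; rw [Finsupp.single_add]

noncomputable def lkH (A : Finset ℕ) : Chain →+ Chain :=
  { toFun := lkC A, map_zero' := lkC_zero A, map_add' := lkC_add A }

noncomputable def qH (A : Finset ℕ) : Chain →+ Chain :=
  { toFun := QC A, map_zero' := QC_zero A, map_add' := QC_add A }

noncomputable def renH (f : ℕ → ℕ) : Chain →+ Chain :=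
  { toFun := renameC f, map_zero' := renameC_zero f, map_add' := renameC_add f }

lemma lkC_sum (A : Finset ℕ) (p : Chain) (F : Finset ℕ → ZMod 2 → Chain) :
    lkC A (p.sum F) = p.sum fun a b => lkC A (F a b) :=
  map_finsuppSum (lkH A) p F

lemma QC_sum (A : Finset ℕ) (p : Chain) (F : Finset ℕ → ZMod 2 → Chain) :
    QC A (p.sum F) = p.sum fun a b => QC A (F a b) :=
  map_finsuppSum (qH A) p F

lemma renameC_sum (f : ℕ → ℕ) (p : Chain) (F : Finset ℕ → ZMod 2 → Chain) :
    renameC f (p.sum F) = p.sum fun a b => renameC f (F a b) :=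
  map_finsuppSum (renH f) p F

lemma renameC_finsetSum (f : ℕ → ℕ) {ι : Type*} (s : Finset ι) (F : ι → Chain) :
    renameC f (∑ i ∈ s, F i) = ∑ i ∈ s, renameC f (F i) :=
  map_sum (renH f) F s

end Lemmas

section Part2
variable {K K' L L' P : Chain} {A B g h : Finset ℕ} {a b c : ZMod 2} {f : ℕ → ℕ}

lemma mem_vertsC {x : ℕ} : x ∈ vertsC K ↔ ∃ g ∈ K.support, x ∈ g := by
  simp [vertsC, Finset.mem_sup]

lemma subset_vertsC (hg : g ∈ K.support) : g ⊆ vertsC K :=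
  fun x hx => mem_vertsC.mpr ⟨g, hg, hx⟩

lemma renameC_eq_mapDomain (f : ℕ → ℕ) (K : Chain) :
    renameC f K = Finsupp.mapDomain (fun g => g.image f) K := rfl

lemma support_renameC (hf : Function.Injective f) (K : Chain) :
    (renameC f K).support = K.support.image (fun g => g.image f) := by
  rw [renameC_eq_mapDomain]
  exact Finsupp.mapDomain_support_of_injective (Finset.image_injective hf) _

lemma vertsC_renameC (hf : Function.Injective f) (K : Chain) :
    vertsC (renameC f K) = (vertsC K).image f := by
  ext x
  simp only [mem_vertsC, support_renameC hf, Finset.mem_image]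
  constructor
  · rintro ⟨G, ⟨g, hg, rfl⟩, hx⟩
    obtain ⟨y, hy, rfl⟩ := Finset.mem_image.mp hx
    exact ⟨y, ⟨g, hg, hy⟩, rfl⟩
  · rintro ⟨y, hy, rfl⟩
    obtain ⟨g, hg, hyg⟩ := hy
    exact ⟨g.image f, ⟨g, hg, rfl⟩, Finset.mem_image_of_mem f hyg⟩

lemma mem_support_joinC {G : Finset ℕ} (hG : G ∈ (joinC K P).support) :
    ∃ g ∈ K.support, ∃ h ∈ P.support, G = g ∪ h := by
  have h1 := Finsupp.support_sum hG
  rw [Finset.mem_biUnion] at h1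
  obtain ⟨g, hg, h2⟩ := h1
  have h3 := Finsupp.support_sum h2
  rw [Finset.mem_biUnion] at h3
  obtain ⟨h, hh, h4⟩ := h3
  have h5 := Finsupp.support_single_subset h4
  exact ⟨g, hg, h, hh, Finset.mem_singleton.mp h5⟩

lemma vertsC_joinC_subset (K P : Chain) : vertsC (joinC K P) ⊆ vertsC K ∪ vertsC P := by
  intro x hx
  obtain ⟨G, hG, hxG⟩ := mem_vertsC.mp hx
  obtain ⟨g, hg, h, hh, rfl⟩ := mem_support_joinC hG
  rcases Finset.mem_union.mp hxG with h' | h'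
  · exact Finset.mem_union_left _ (subset_vertsC hg h')
  · exact Finset.mem_union_right _ (subset_vertsC hh h')

lemma union_eq_union_of_disjoint {VK VP : Finset ℕ} (hd : Disjoint VK VP)
    {g g' h h' : Finset ℕ} (hg : g ⊆ VK) (hg' : g' ⊆ VK) (hh : h ⊆ VP) (hh' : h' ⊆ VP)
    (he : g ∪ h = g' ∪ h') : g = g' ∧ h = h' := by
  have key : ∀ (p p' q q' : Finset ℕ), p ⊆ VK → p' ⊆ VK → q ⊆ VP → q' ⊆ VP →
      p ∪ q = p' ∪ q' → p ⊆ p' := by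
    intro p p' q q' hp hp' hq hq' hpq x hx
    have : x ∈ p' ∪ q' := by rw [← hpq]; exact Finset.mem_union_left _ hx
    rcases Finset.mem_union.mp this with h1 | h1
    · exact h1
    · exact absurd (hq' h1) (fun hc => Finset.disjoint_left.mp hd (hp hx) hc)
  have key2 : ∀ (p p' q q' : Finset ℕ), p ⊆ VK → p' ⊆ VK → q ⊆ VP → q' ⊆ VP →
      p ∪ q = p' ∪ q' → q ⊆ q' := by
    intro p p' q q' hp hp' hq hq' hpq x hx
    have : x ∈ p' ∪ q' := by rw [← hpq]; exact Finset.mem_union_right _ hx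
    rcases Finset.mem_union.mp this with h1 | h1
    · exact absurd (hq hx) (fun hc => Finset.disjoint_left.mp hd (hp' h1) hc)
    · exact h1
  exact ⟨Finset.Subset.antisymm (key _ _ _ _ hg hg' hh hh' he)
          (key _ _ _ _ hg' hg hh' hh he.symm),
        Finset.Subset.antisymm (key2 _ _ _ _ hg hg' hh hh' he)
          (key2 _ _ _ _ hg' hg hh' hh he.symm)⟩

lemma joinC_apply_union (hd : Disjoint (vertsC K) (vertsC P))
    (hg : g ∈ K.support) (hh : h ∈ P.support) :
    joinC K P (g ∪ h) = K g * P h := by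
  unfold joinC
  rw [Finsupp.sum_apply, Finsupp.sum, Finset.sum_eq_single_of_mem g hg]
  · rw [Finsupp.sum_apply, Finsupp.sum, Finset.sum_eq_single_of_mem h hh]
    · rw [Finsupp.single_apply, if_pos rfl]
    · intro B hB hne
      rw [Finsupp.single_apply, if_neg]
      intro hEq
      exact hne (union_eq_union_of_disjoint hd (subset_vertsC hg) (subset_vertsC hg)
        (subset_vertsC hB) (subset_vertsC hh) hEq).2
  · intro A hA hne
    rw [Finsupp.sum_apply]
    apply Finset.sum_eq_zero
    intro B hB
    show (Finsupp.single (A ∪ B) (K A * P B) : Chain) (g ∪ h) = 0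
    rw [Finsupp.single_apply, if_neg]
    intro hEq
    exact hne (union_eq_union_of_disjoint hd (subset_vertsC hA) (subset_vertsC hg)
      (subset_vertsC hB) (subset_vertsC hh) hEq).1

lemma union_mem_support_joinC (hd : Disjoint (vertsC K) (vertsC P))
    (hg : g ∈ K.support) (hh : h ∈ P.support) :
    g ∪ h ∈ (joinC K P).support := by
  rw [Finsupp.mem_support_iff, joinC_apply_union hd hg hh]
  exact mul_ne_zero (Finsupp.mem_support_iff.mp hg) (Finsupp.mem_support_iff.mp hh)

end Part2

section Part3
variable {K K' L L' P : Chain} {A B g h : Finset ℕ} {a b c : ZMod 2} {f f' : ℕ → ℕ}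

lemma renameC_joinC (f : ℕ → ℕ) (K L : Chain) :
    renameC f (joinC K L) = joinC (renameC f K) (renameC f L) := by
  induction K using Finsupp.induction_linear with
  | zero => simp [joinC_zero_left, renameC_zero]
  | add p q hp hq => simp only [joinC_add_left, renameC_add, hp, hq]
  | single A a =>
    induction L using Finsupp.induction_linear with
    | zero => simp [joinC_zero_right, renameC_zero]
    | add p q hp hq => simp only [joinC_add_right, renameC_add, hp, hq]
    | single B b =>
      rw [joinC_single_single, renameC_single, renameC_single, renameC_single,
        joinC_single_single, Finset.image_union]

lemma renameC_comp (f f' : ℕ → ℕ) (K : Chain) :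
    renameC f' (renameC f K) = renameC (f' ∘ f) K := by
  induction K using Finsupp.induction_linear with
  | zero => simp [renameC_zero]
  | add p q hp hq => simp only [renameC_add, hp, hq]
  | single g c => rw [renameC_single, renameC_single, renameC_single, Finset.image_image]

lemma renameC_id (K : Chain) : renameC id K = K := by
  induction K using Finsupp.induction_linear with
  | zero => simp [renameC_zero]
  | add p q hp hq => simp only [renameC_add, hp, hq]
  | single g c => rw [renameC_single, Finset.image_id]

lemma renameC_congr (h : ∀ x ∈ vertsC K, f x = f' x) : renameC f K = renameC f' K := by
  unfold renameC
  apply Finsupp.sum_congr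
  intro g hg
  congr 1
  apply Finset.image_congr
  intro x hx
  exact h x (subset_vertsC hg hx)

lemma renameC_sbnd (hf : Function.Injective f) (A : Finset ℕ) :
    renameC f (sbnd A) = sbnd (A.image f) := by
  unfold sbnd
  rw [renameC_finsetSum]
  rw [Finset.sum_image (fun x _ y _ h => hf h)]
  apply Finset.sum_congr rfl
  intro i _
  rw [renameC_single, Finset.image_erase hf]

lemma renameC_lkC (hf : Function.Injective f) (A : Finset ℕ) (K : Chain) :
    lkC (A.image f) (renameC f K) = renameC f (lkC A K) := by
  induction K using Finsupp.induction_linear with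
  | zero => simp [renameC_zero, lkC_zero]
  | add p q hp hq => simp only [renameC_add, lkC_add, hp, hq]
  | single g c =>
    rw [renameC_single, lkC_single, lkC_single]
    by_cases hAg : A ⊆ g
    · rw [if_pos hAg, if_pos (Finset.image_subset_image hAg), renameC_single,
        Finset.image_sdiff _ _ hf]
    · rw [if_neg hAg, if_neg (fun hc => hAg ((Finset.image_subset_image_iff hf).mp hc)),
        renameC_zero]

lemma renameC_QC (hf : Function.Injective f) (A : Finset ℕ) (K : Chain) :
    QC (A.image f) (renameC f K) = renameC f (QC A K) := by
  induction K using Finsupp.induction_linear with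
  | zero => simp [renameC_zero, QC_zero]
  | add p q hp hq => simp only [renameC_add, QC_add, hp, hq]
  | single g c =>
    rw [renameC_single, QC_single, QC_single]
    by_cases hAg : A ⊆ g
    · rw [if_pos hAg, if_pos (Finset.image_subset_image hAg), renameC_zero]
    · rw [if_neg hAg, if_neg (fun hc => hAg ((Finset.image_subset_image_iff hf).mp hc)),
        renameC_single]

lemma renameC_subdivC (hf : Function.Injective f) (A : Finset ℕ) (a : ℕ) (K : Chain) :
    renameC f (subdivC A a K) = subdivC (A.image f) (f a) (renameC f K) := by
  unfold subdivC
  rw [renameC_add, renameC_joinC, renameC_joinC, renameC_single, renameC_sbnd hf,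
    ← renameC_lkC hf, ← renameC_QC hf, Finset.image_singleton]

lemma renameC_weldC (hf : Function.Injective f) (A : Finset ℕ) (a : ℕ) (B K : Chain) :
    renameC f (weldC A a B K) = weldC (A.image f) (f a) (renameC f B) (renameC f K) := by
  unfold weldC
  rw [renameC_add, renameC_joinC, renameC_single, ← renameC_QC hf, Finset.image_singleton]

lemma subset_union_left_iff (hd : Disjoint A h) : A ⊆ g ∪ h ↔ A ⊆ g := by
  constructor
  · intro hsub x hx
    rcases Finset.mem_union.mp (hsub hx) with h1 | h1
    · exact h1
    · exact absurd h1 (Finset.disjoint_left.mp hd hx)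
  · intro hsub
    exact hsub.trans Finset.subset_union_left

lemma lkC_joinC (hAP : Disjoint A (vertsC P)) (K : Chain) :
    lkC A (joinC K P) = joinC (lkC A K) P := by
  have hA : ∀ h ∈ P.support, Disjoint A h := fun h hh =>
    Finset.disjoint_left.mpr fun x hxA hxh =>
      Finset.disjoint_left.mp hAP hxA (subset_vertsC hh hxh)
  induction K using Finsupp.induction_linear with
  | zero => rw [joinC_zero_left, lkC_zero, joinC_zero_left]
  | add p q hp hq => rw [joinC_add_left, lkC_add, lkC_add, joinC_add_left, hp, hq]
  | single g c =>
    rw [joinC_single_left, lkC_sum, lkC_single]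
    by_cases hAg : A ⊆ g
    · rw [if_pos hAg, joinC_single_left]
      apply Finsupp.sum_congr
      intro h hh
      rw [lkC_single, if_pos ((subset_union_left_iff (hA h hh)).mpr hAg),
        Finset.union_sdiff_distrib, Finset.sdiff_eq_self_iff_disjoint.mpr (hA h hh).symm]
    · rw [if_neg hAg, joinC_zero_left]
      have : ∀ h ∈ P.support,
          lkC A (Finsupp.single (g ∪ h) (c * P h)) = (0 : Chain) := by
        intro h hh
        rw [lkC_single, if_neg (fun hc => hAg ((subset_union_left_iff (hA h hh)).mp hc))]
      rw [Finsupp.sum_congr (g2 := fun _ _ => (0:Chain)) this, Finsupp.sum_fun_zero]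

lemma QC_joinC (hAP : Disjoint A (vertsC P)) (K : Chain) :
    QC A (joinC K P) = joinC (QC A K) P := by
  have hA : ∀ h ∈ P.support, Disjoint A h := fun h hh =>
    Finset.disjoint_left.mpr fun x hxA hxh =>
      Finset.disjoint_left.mp hAP hxA (subset_vertsC hh hxh)
  induction K using Finsupp.induction_linear with
  | zero => rw [joinC_zero_left, QC_zero, joinC_zero_left]
  | add p q hp hq => rw [joinC_add_left, QC_add, QC_add, joinC_add_left, hp, hq]
  | single g c =>
    rw [joinC_single_left, QC_sum, QC_single]
    by_cases hAg : A ⊆ g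
    · rw [if_pos hAg, joinC_zero_left]
      have : ∀ h ∈ P.support,
          QC A (Finsupp.single (g ∪ h) (c * P h)) = (0 : Chain) := by
        intro h hh
        rw [QC_single, if_pos ((subset_union_left_iff (hA h hh)).mpr hAg)]
      rw [Finsupp.sum_congr (g2 := fun _ _ => (0:Chain)) this, Finsupp.sum_fun_zero]
    · rw [if_neg hAg, joinC_single_left]
      apply Finsupp.sum_congr
      intro h hh
      rw [QC_single, if_neg (fun hc => hAg ((subset_union_left_iff (hA h hh)).mp hc))]

lemma subdivC_joinC (hAP : Disjoint A (vertsC P)) (a : ℕ) (K : Chain) :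
    subdivC A a (joinC K P) = joinC (subdivC A a K) P := by
  unfold subdivC
  rw [lkC_joinC hAP, QC_joinC hAP,
    ← joinC_assoc (sbnd A) (lkC A K) P,
    ← joinC_assoc (Finsupp.single {a} 1) (joinC (sbnd A) (lkC A K)) P,
    ← joinC_add_left]

lemma weldC_joinC {a' : ℕ} (haP : Disjoint {a'} (vertsC P)) (A : Finset ℕ) (B K : Chain) :
    weldC A a' (joinC B P) (joinC K P) = joinC (weldC A a' B K) P := by
  unfold weldC
  rw [QC_joinC haP, ← joinC_assoc, ← joinC_add_left]

end Part3

section Part4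
variable {K K' L L' P : Chain} {A B g h : Finset ℕ} {a b c : ZMod 2} {f f' : ℕ → ℕ}

lemma vertsC_add_subset (K L : Chain) : vertsC (K + L) ⊆ vertsC K ∪ vertsC L := by
  intro x hx
  obtain ⟨G, hG, hxG⟩ := mem_vertsC.mp hx
  rcases Finset.mem_union.mp (Finsupp.support_add hG) with h1 | h1
  · exact Finset.mem_union_left _ (mem_vertsC.mpr ⟨G, h1, hxG⟩)
  · exact Finset.mem_union_right _ (mem_vertsC.mpr ⟨G, h1, hxG⟩)

lemma vertsC_single_subset (s : Finset ℕ) (c : ZMod 2) :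
    vertsC (Finsupp.single s c) ⊆ s := by
  intro x hx
  obtain ⟨G, hG, hxG⟩ := mem_vertsC.mp hx
  have := Finsupp.support_single_subset hG
  rwa [Finset.mem_singleton.mp this] at hxG

lemma vertsC_lkC_subset (A : Finset ℕ) (K : Chain) : vertsC (lkC A K) ⊆ vertsC K := by
  intro x hx
  obtain ⟨G, hG, hxG⟩ := mem_vertsC.mp hx
  have h1 := Finsupp.support_sum hG
  rw [Finset.mem_biUnion] at h1
  obtain ⟨g, hg, h2⟩ := h1
  by_cases hc : A ⊆ g
  · rw [if_pos hc] at h2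
    have := Finset.mem_singleton.mp (Finsupp.support_single_subset h2)
    subst this
    exact subset_vertsC hg (Finset.mem_sdiff.mp hxG).1
  · rw [if_neg hc] at h2
    simp at h2

lemma vertsC_QC_subset (A : Finset ℕ) (K : Chain) : vertsC (QC A K) ⊆ vertsC K := by
  intro x hx
  obtain ⟨G, hG, hxG⟩ := mem_vertsC.mp hx
  have h1 := Finsupp.support_sum hG
  rw [Finset.mem_biUnion] at h1
  obtain ⟨g, hg, h2⟩ := h1
  by_cases hc : A ⊆ g
  · rw [if_pos hc] at h2; simp at h2
  · rw [if_neg hc] at h2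
    have := Finset.mem_singleton.mp (Finsupp.support_single_subset h2)
    subst this
    exact subset_vertsC hg hxG

lemma vertsC_sbnd_subset (A : Finset ℕ) : vertsC (sbnd A) ⊆ A := by
  intro x hx
  obtain ⟨G, hG, hxG⟩ := mem_vertsC.mp hx
  obtain ⟨i, hi, h2⟩ := Finsupp.mem_support_finset_sum _ hG
  have := Finset.mem_singleton.mp (Finsupp.support_single_subset h2)
  subst this
  exact Finset.erase_subset _ _ hxG

lemma vertsC_subdivC_subset (A : Finset ℕ) (a : ℕ) (K : Chain) :
    vertsC (subdivC A a K) ⊆ insert a (A ∪ vertsC K) := by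
  intro x hx
  rcases Finset.mem_union.mp (vertsC_add_subset _ _ hx) with h1 | h1
  · rcases Finset.mem_union.mp (vertsC_joinC_subset _ _ h1) with h2 | h2
    · have := vertsC_single_subset {a} 1 h2
      rw [Finset.mem_singleton.mp this]
      exact Finset.mem_insert_self _ _
    · rcases Finset.mem_union.mp (vertsC_joinC_subset _ _ h2) with h3 | h3
      · exact Finset.mem_insert_of_mem (Finset.mem_union_left _ (vertsC_sbnd_subset A h3))
      · exact Finset.mem_insert_of_mem
          (Finset.mem_union_right _ (vertsC_lkC_subset A K h3))
  · exact Finset.mem_insert_of_mem (Finset.mem_union_right _ (vertsC_QC_subset A K h1))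

lemma vertsC_weldC_subset (A : Finset ℕ) (a : ℕ) (B K : Chain) :
    vertsC (weldC A a B K) ⊆ A ∪ vertsC B ∪ vertsC K := by
  intro x hx
  rcases Finset.mem_union.mp (vertsC_add_subset _ _ hx) with h1 | h1
  · rcases Finset.mem_union.mp (vertsC_joinC_subset _ _ h1) with h2 | h2
    · exact Finset.mem_union_left _ (Finset.mem_union_left _ (vertsC_single_subset A 1 h2))
    · exact Finset.mem_union_left _ (Finset.mem_union_right _ h2)
  · exact Finset.mem_union_right _ (vertsC_QC_subset _ K h1)

lemma exists_perm_extends (D : Finset ℕ) (q : ℕ → ℕ) (hq : Set.InjOn q (D : Set ℕ)) :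
    ∃ σ : Equiv.Perm ℕ, ∀ x ∈ D, σ x = q x := by
  classical
  have hD : (D : Set ℕ).Finite := D.finite_toSet
  have hDc : ((D : Set ℕ)ᶜ).Infinite := hD.infinite_compl
  have hqD : (q '' (D : Set ℕ)).Finite := hD.image q
  have hqDc : ((q '' (D : Set ℕ))ᶜ).Infinite := hqD.infinite_compl
  haveI i1 : Infinite ((D : Set ℕ)ᶜ : Set ℕ) := hDc.to_subtype
  haveI i2 : Infinite ((q '' (D : Set ℕ))ᶜ : Set ℕ) := hqDc.to_subtype
  obtain ⟨e₂⟩ : Nonempty ((((D : Set ℕ)ᶜ : Set ℕ)) ≃ (((q '' (D : Set ℕ))ᶜ : Set ℕ))) :=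
    nonempty_equiv_of_countable
  let e₁ : ((D : Set ℕ) : Set ℕ) ≃ (q '' (D : Set ℕ)) := Equiv.Set.imageOfInjOn q _ hq
  refine ⟨((Equiv.Set.sumCompl (D : Set ℕ)).symm.trans
      (e₁.sumCongr e₂)).trans (Equiv.Set.sumCompl _), fun x hx => ?_⟩
  have hx' : x ∈ (D : Set ℕ) := hx
  simp only [Equiv.trans_apply, Equiv.Set.sumCompl_symm_apply_of_mem hx',
    Equiv.sumCongr_apply, Sum.map_inl, Equiv.Set.sumCompl_apply_inl]
  rfl

lemma exists_step_perm (hf : Function.Bijective f) (K P : Chain)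
    (hdisj : Disjoint (vertsC (renameC f K)) (vertsC P)) (W : Finset ℕ) :
    ∃ σ : Equiv.Perm ℕ, (∀ x ∈ vertsC K, σ x = f x) ∧
      (∀ x ∈ vertsC K ∪ W, σ x ∉ vertsC P) ∧
      (∀ x ∈ W, x ∉ vertsC K → σ x ∉ vertsC (renameC f K)) := by
  classical
  set K' := renameC f K with hK'
  set N : ℕ := (vertsC K' ∪ vertsC P).sup id with hN
  have hle : ∀ y ∈ vertsC K' ∪ vertsC P, y ≤ N := fun y hy => Finset.le_sup (f := id) hy
  set q : ℕ → ℕ := fun x => if x ∈ vertsC K then f x else N + 1 + x with hq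
  have hmemK' : ∀ x ∈ vertsC K, f x ∈ vertsC K' := by
    intro x hx
    rw [hK', vertsC_renameC hf.injective]
    exact Finset.mem_image_of_mem f hx
  have hinj : Set.InjOn q ↑(vertsC K ∪ W) := by
    intro x hx y hy hxy
    by_cases hxK : x ∈ vertsC K <;> by_cases hyK : y ∈ vertsC K
    · rw [hq] at hxy; simp only [if_pos hxK, if_pos hyK] at hxy
      exact hf.injective hxy
    · rw [hq] at hxy; simp only [if_pos hxK, if_neg hyK] at hxy
      have := hle (f x) (Finset.mem_union_left _ (hmemK' x hxK))
      omega
    · rw [hq] at hxy; simp only [if_neg hxK, if_pos hyK] at hxy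
      have := hle (f y) (Finset.mem_union_left _ (hmemK' y hyK))
      omega
    · rw [hq] at hxy; simp only [if_neg hxK, if_neg hyK] at hxy
      omega
  obtain ⟨σ, hσ⟩ := exists_perm_extends (vertsC K ∪ W) q hinj
  refine ⟨σ, ?_, ?_, ?_⟩
  · intro x hx
    rw [hσ x (Finset.mem_union_left _ hx), hq]
    simp [hx]
  · intro x hx
    rw [hσ x hx]
    by_cases hxK : x ∈ vertsC K
    · rw [hq]; simp only [if_pos hxK]
      intro hc
      exact (Finset.disjoint_left.mp hdisj (hmemK' x hxK)) hc
    · rw [hq]; simp only [if_neg hxK]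
      intro hc
      have := hle _ (Finset.mem_union_right _ hc)
      omega
  · intro x hxW hxK
    rw [hσ x (Finset.mem_union_right _ hxW)]
    rw [hq]; simp only [if_neg hxK]
    intro hc
    have := hle _ (Finset.mem_union_left _ hc)
    omega

end Part4

section Part5

lemma step_lift (P : Chain) (hP : P ≠ 0) {K₁ K₂ : Chain} (hstep : StellarMove K₁ K₂)
    {f : ℕ → ℕ} (hf : Function.Bijective f)
    (hdisj : Disjoint (vertsC (renameC f K₁)) (vertsC P)) :
    ∃ f₂ : ℕ → ℕ, Function.Bijective f₂ ∧
      Disjoint (vertsC (renameC f₂ K₂)) (vertsC P) ∧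
      StellarEquiv (joinC (renameC f K₁) P) (joinC (renameC f₂ K₂) P) := by
  classical
  cases hstep with
  | subdiv A a _K hA hA' ha =>
    obtain ⟨σ, c1, c2, c3⟩ := exists_step_perm hf K₁ P hdisj {a}
    have haK : a ∉ vertsC K₁ := fun hc => by
      obtain ⟨g, hg, hag⟩ := mem_vertsC.mp hc
      exact ha g hg hag
    have hKeq : renameC (⇑σ) K₁ = renameC f K₁ := renameC_congr c1
    obtain ⟨g, hg, hAg⟩ := hA
    have hAK : A ⊆ vertsC K₁ := hAg.trans (subset_vertsC hg)
    have hAimg : A.image (⇑σ) ⊆ vertsC (renameC f K₁) := by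
      rw [← hKeq, vertsC_renameC σ.injective]
      exact Finset.image_subset_image hAK
    have ha' : σ a ∉ vertsC (renameC f K₁) := c3 a (Finset.mem_singleton_self a) haK
    have haP : σ a ∉ vertsC P :=
      c2 a (Finset.mem_union_right _ (Finset.mem_singleton_self a))
    have hAdisjP : Disjoint (A.image (⇑σ)) (vertsC P) :=
      Finset.disjoint_left.mpr fun {x} hx hy =>
        Finset.disjoint_left.mp hdisj (hAimg hx) hy
    obtain ⟨h0, hh0⟩ := Finsupp.support_nonempty_iff.mpr hP
    have hgK' : g.image (⇑σ) ∈ (renameC f K₁).support := by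
      rw [← hKeq, support_renameC σ.injective]
      exact Finset.mem_image_of_mem _ hg
    have hex : ∃ G ∈ (joinC (renameC f K₁) P).support, A.image (⇑σ) ⊆ G :=
      ⟨g.image (⇑σ) ∪ h0, union_mem_support_joinC hdisj hgK' hh0,
        (Finset.image_subset_image hAg).trans Finset.subset_union_left⟩
    have hfresh : ∀ G ∈ (joinC (renameC f K₁) P).support, σ a ∉ G := by
      intro G hG hcon
      obtain ⟨g1, hg1, h1, hh1, rfl⟩ := mem_support_joinC hG
      rcases Finset.mem_union.mp hcon with h2 | h2
      · exact ha' (subset_vertsC hg1 h2)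
      · exact haP (subset_vertsC hh1 h2)
    have hmove := StellarMove.subdiv (A.image (⇑σ)) (σ a) (joinC (renameC f K₁) P)
      hex (hA'.image (⇑σ)) hfresh
    rw [subdivC_joinC hAdisjP] at hmove
    refine ⟨⇑σ, σ.bijective, ?_, ?_⟩
    · rw [renameC_subdivC σ.injective, hKeq]
      apply Finset.disjoint_left.mpr
      intro x hx hxP
      rcases Finset.mem_insert.mp (vertsC_subdivC_subset _ _ _ hx) with h1 | h1
      · exact haP (h1 ▸ hxP)
      · rcases Finset.mem_union.mp h1 with h2 | h2
        · exact Finset.disjoint_left.mp hAdisjP h2 hxP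
        · exact Finset.disjoint_left.mp hdisj h2 hxP
    · rw [renameC_subdivC σ.injective, hKeq]
      exact Relation.ReflTransGen.single hmove
  | weld A a B _K hlk hAw hA' =>
    obtain ⟨σ, c1, c2, c3⟩ := exists_step_perm hf K₁ P hdisj (insert a (A ∪ vertsC B))
    have hKeq : renameC (⇑σ) K₁ = renameC f K₁ := renameC_congr c1
    have haP : σ a ∉ vertsC P :=
      c2 a (Finset.mem_union_right _ (Finset.mem_insert_self a _))
    have hd : Disjoint ({σ a} : Finset ℕ) (vertsC P) :=
      Finset.disjoint_singleton_left.mpr haP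
    have hA₂P : ∀ x ∈ A.image (⇑σ), x ∉ vertsC P := by
      intro x hx
      obtain ⟨y, hy, rfl⟩ := Finset.mem_image.mp hx
      exact c2 y (Finset.mem_union_right _
        (Finset.mem_insert_of_mem (Finset.mem_union_left _ hy)))
    have hB₂P : ∀ x ∈ vertsC (renameC (⇑σ) B), x ∉ vertsC P := by
      intro x hx
      rw [vertsC_renameC σ.injective] at hx
      obtain ⟨y, hy, rfl⟩ := Finset.mem_image.mp hx
      exact c2 y (Finset.mem_union_right _
        (Finset.mem_insert_of_mem (Finset.mem_union_right _ hy)))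
    have hlk₂ : lkC {σ a} (renameC f K₁) = joinC (sbnd (A.image (⇑σ))) (renameC (⇑σ) B) := by
      have h1 := renameC_lkC σ.injective {a} K₁
      rw [Finset.image_singleton] at h1
      rw [← hKeq, h1, hlk, renameC_joinC, renameC_sbnd σ.injective]
    have hAw₂ : ∀ g' ∈ (renameC f K₁).support, ¬ A.image (⇑σ) ⊆ g' := by
      rw [← hKeq, support_renameC σ.injective]
      intro g' hg'
      obtain ⟨g0, hg0, rfl⟩ := Finset.mem_image.mp hg'
      exact fun hc => hAw g0 hg0 ((Finset.image_subset_image_iff σ.injective).mp hc)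
    have hlkJ : lkC {σ a} (joinC (renameC f K₁) P) =
        joinC (sbnd (A.image (⇑σ))) (joinC (renameC (⇑σ) B) P) := by
      rw [lkC_joinC hd, hlk₂, joinC_assoc]
    have hAJ : ∀ G ∈ (joinC (renameC f K₁) P).support, ¬ A.image (⇑σ) ⊆ G := by
      intro G hG hc
      obtain ⟨g1, hg1, h1, hh1, rfl⟩ := mem_support_joinC hG
      have hsub : A.image (⇑σ) ⊆ g1 := by
        intro x hx
        rcases Finset.mem_union.mp (hc hx) with h2 | h2
        · exact h2
        · exact absurd (subset_vertsC hh1 h2) (hA₂P x hx)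
      exact hAw₂ g1 hg1 hsub
    have hmove := StellarMove.weld (A.image (⇑σ)) (σ a) (joinC (renameC (⇑σ) B) P)
      (joinC (renameC f K₁) P) hlkJ hAJ (hA'.image (⇑σ))
    rw [weldC_joinC hd] at hmove
    refine ⟨⇑σ, σ.bijective, ?_, ?_⟩
    · rw [renameC_weldC σ.injective, hKeq]
      apply Finset.disjoint_left.mpr
      intro x hx hxP
      rcases Finset.mem_union.mp (vertsC_weldC_subset _ _ _ _ hx) with h1 | h1
      · rcases Finset.mem_union.mp h1 with h2 | h2
        · exact hA₂P x h2 hxP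
        · exact hB₂P x h2 hxP
      · exact Finset.disjoint_left.mp hdisj h1 hxP
    · rw [renameC_weldC σ.injective, hKeq]
      exact Relation.ReflTransGen.single hmove
  | relabel f₀ hf₀ _K =>
    have hcomp : (f ∘ ⇑(Equiv.ofBijective f₀ hf₀).symm) ∘ f₀ = f := by
      funext x
      have h1 : (Equiv.ofBijective f₀ hf₀).symm (f₀ x) = x :=
        (Equiv.ofBijective f₀ hf₀).symm_apply_apply x
      simp only [Function.comp_apply, h1]
    refine ⟨f ∘ ⇑(Equiv.ofBijective f₀ hf₀).symm,
      hf.comp (Equiv.ofBijective f₀ hf₀).symm.bijective, ?_, ?_⟩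
    · rw [renameC_comp, hcomp]; exact hdisj
    · rw [renameC_comp, hcomp]
      exact Relation.ReflTransGen.refl

lemma aux_join (P : Chain) (hP : P ≠ 0) {M K : Chain}
    (h : Relation.ReflTransGen StellarMove M K)
    (hMP : Disjoint (vertsC M) (vertsC P)) :
    ∃ f : ℕ → ℕ, Function.Bijective f ∧
      Disjoint (vertsC (renameC f K)) (vertsC P) ∧
      StellarEquiv (joinC M P) (joinC (renameC f K) P) := by
  induction h with
  | refl => exact ⟨id, Function.bijective_id, by rwa [renameC_id], by rw [renameC_id]; exact Relation.ReflTransGen.refl⟩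
  | tail hMK hstep ih =>
    obtain ⟨f, hfb, hdisj, hequiv⟩ := ih
    obtain ⟨f₂, hf₂b, hdisj₂, hequiv₂⟩ := step_lift P hP hstep hfb hdisj
    exact ⟨f₂, hf₂b, hdisj₂, hequiv.trans hequiv₂⟩

end Part5

/-- stellar equivalence is preserved by joining with a fixed complex `P`
vertex-disjoint from both sides. -/
theorem stellarEquiv_join_right (M L P : Chain)
    (h : StellarEquiv M L)
    (hMP : Disjoint (vertsC M) (vertsC P))
    (hLP : Disjoint (vertsC L) (vertsC P)) :
    StellarEquiv (joinC M P) (joinC L P) := by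
  classical
  by_cases hP : P = 0
  · subst hP
    rw [joinC_zero_right, joinC_zero_right]
    exact Relation.ReflTransGen.refl
  · obtain ⟨f, hfb, hdisj, hequiv⟩ := aux_join P hP h hMP
    set e := Equiv.ofBijective f hfb with he
    set q : ℕ → ℕ := fun x => if x ∈ vertsC P then x else e.symm x with hq
    have hfL : vertsC (renameC f L) = (vertsC L).image f := vertsC_renameC hfb.injective L
    have hkey : ∀ y : ℕ, y ∈ vertsC (renameC f L) ∪ vertsC P → y ∉ vertsC P →
        ∃ z ∈ vertsC L, f z = y ∧ q y = z := by
      intro y hy hyP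
      have hyL : y ∈ vertsC (renameC f L) := by
        rcases Finset.mem_union.mp hy with h1 | h1
        · exact h1
        · exact absurd h1 hyP
      rw [hfL] at hyL
      obtain ⟨z, hz, rfl⟩ := Finset.mem_image.mp hyL
      have hsz : e.symm (f z) = z := e.symm_apply_apply z
      refine ⟨z, hz, rfl, ?_⟩
      simp only [hq]
      rw [if_neg hyP]
      exact hsz
    have hinj : Set.InjOn q ↑(vertsC (renameC f L) ∪ vertsC P) := by
      intro x hx y hy hxy
      have hx' := Finset.mem_coe.mp hx
      have hy' := Finset.mem_coe.mp hy
      by_cases hxP : x ∈ vertsC P <;> by_cases hyP : y ∈ vertsC P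
      · have hqx : q x = x := by simp only [hq]; rw [if_pos hxP]
        have hqy : q y = y := by simp only [hq]; rw [if_pos hyP]
        rwa [hqx, hqy] at hxy
      · exfalso
        obtain ⟨z, hz, rfl, hqz⟩ := hkey y hy' hyP
        have hqx : q x = x := by simp only [hq]; rw [if_pos hxP]
        rw [hqx, hqz] at hxy
        subst hxy
        exact Finset.disjoint_left.mp hLP hz hxP
      · exfalso
        obtain ⟨z, hz, rfl, hqz⟩ := hkey x hx' hxP
        have hqy : q y = y := by simp only [hq]; rw [if_pos hyP]
        rw [hqy, hqz] at hxy
        subst hxy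
        exact Finset.disjoint_left.mp hLP hz hyP
      · have hqx : q x = e.symm x := by simp only [hq]; rw [if_neg hxP]
        have hqy : q y = e.symm y := by simp only [hq]; rw [if_neg hyP]
        rw [hqx, hqy] at hxy
        exact e.symm.injective hxy
    obtain ⟨σ, hσ⟩ := exists_perm_extends _ q hinj
    have hrenP : renameC (⇑σ) P = P := by
      have hcongr : ∀ x ∈ vertsC P, (⇑σ) x = id x := by
        intro x hx
        rw [hσ x (Finset.mem_union_right _ hx)]
        simp only [hq]
        rw [if_pos hx]
        rfl
      rw [renameC_congr hcongr, renameC_id]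
    have hrenL : renameC (⇑σ) (renameC f L) = L := by
      rw [renameC_comp]
      have hcongr : ∀ x ∈ vertsC L, (⇑σ ∘ f) x = id x := by
        intro x hx
        have hfx : f x ∈ vertsC (renameC f L) := by
          rw [hfL]; exact Finset.mem_image_of_mem f hx
        have hfxP : f x ∉ vertsC P := fun hc => Finset.disjoint_left.mp hdisj hfx hc
        simp only [Function.comp_apply, id_eq]
        rw [hσ (f x) (Finset.mem_union_left _ hfx)]
        simp only [hq]
        rw [if_neg hfxP]
        exact e.symm_apply_apply x
      rw [renameC_congr hcongr, renameC_id]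
    have hmove := StellarMove.relabel (⇑σ) σ.bijective (joinC (renameC f L) P)
    rw [renameC_joinC, hrenP, hrenL] at hmove
    exact Relation.ReflTransGen.tail hequiv hmove
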